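/- Assume: cl(Θ) is convex and S is affine, S(θ) = Aθ + γ for an m×k real matrix A and γ ∈ ℝ^m; φ' satisfies lim_{x→0⁺} φ'(x) = −∞; Θ is defined by finitely many linear inequalities, i.e., Θ = {θ ∈ ℝ^k : Bθ ≤ b} for some d×k real matrix B and b ∈ ℝ^d; and M = S(cl(Θ)) is a convex set consisting of probability vectors (every p ∈ M satisfies p ∈ [0,1]^m and Σ_{i=1}^m p_i = 1). Then for every probability vector q ∈ (0,1)^m, the (unique) φ-projection p* of q on M satisfies p* ∈ (0,1)^m. -/

import Mathlib

open Filter Topology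

/-- For `t ∈ (0,1)^m` and `s ∈ [0,1]^m`, the (real-valued) `φ`-divergence
`D_φ(s∣t) = Σ_{i=1}^m t_i φ(s_i/t_i)`. -/
noncomputable def DphiR (φ : ℝ → ℝ) {m : ℕ} (s t : Fin m → ℝ) : ℝ :=
  ∑ i, t i * φ (s i / t i)

/-- `p` is a `φ`-projection of `t` on `M`: `p ∈ M` minimizes `D_φ(·∣t)` over `M`. -/
def IsPhiProjR (φ : ℝ → ℝ) {m : ℕ} (M : Set (Fin m → ℝ)) (t p : Fin m → ℝ) : Prop :=
  p ∈ M ∧ ∀ s ∈ M, DphiR φ p t ≤ DphiR φ s t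

/-- Auxiliary: a point of `M` with a zero coordinate is not a minimizer of the divergence. -/
theorem aux_zero_not_min {m : ℕ} (φ : ℝ → ℝ)
    (hφconv : ConvexOn ℝ (Set.Ici 0) φ)
    (hφdiff : ∀ x : ℝ, 0 < x → DifferentiableAt ℝ φ x)
    (hderiv : Tendsto (deriv φ) (𝓝[>] (0:ℝ)) atBot)
    (M : Set (Fin m → ℝ)) (hMconv : Convex ℝ M)
    (hMrange : ∀ p ∈ M, ∀ i, 0 ≤ p i)
    (q : Fin m → ℝ) (hq : ∀ i, 0 < q i)
    (p : Fin m → ℝ) (hp : p ∈ M) (j : Fin m) (hpj : p j = 0)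
    (p0 : Fin m → ℝ) (hp0 : p0 ∈ M) (hp0pos : ∀ i, 0 < p0 i) :
    ∃ s ∈ M, DphiR φ s q < DphiR φ p q := by
  set c : ℝ := p0 j / q j with hcdef
  have hcpos : 0 < c := div_pos (hp0pos j) (hq j)
  set g : Fin m → ℝ → ℝ :=
    fun i lam => q i * (φ (((1-lam) * p i + lam * p0 i) / q i) - φ (p i / q i)) with hgdef
  -- bounds for i ≠ j
  have key : ∀ i : Fin m, ∃ C : ℝ, i ≠ j → ∀ᶠ lam in 𝓝[>] (0:ℝ), g i lam ≤ lam * C := by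
    intro i
    by_cases hpi : p i = 0
    · -- use monotonicity of secant slopes
      set ci : ℝ := p0 i / q i with hcidef
      have hcipos : 0 < ci := div_pos (hp0pos i) (hq i)
      refine ⟨q i * (φ ci - φ 0), fun _ => ?_⟩
      filter_upwards [Ioc_mem_nhdsGT (zero_lt_one' ℝ)] with lam hlam
      obtain ⟨hlam0, hlam1⟩ := hlam
      have hsec := hφconv.secant_mono (a := 0) (x := lam * ci) (y := ci)
        (Set.self_mem_Ici) (Set.mem_Ici.mpr (by positivity)) (Set.mem_Ici.mpr hcipos.le)
        (by positivity) (ne_of_gt hcipos) (by nlinarith)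
      rw [sub_zero, sub_zero] at hsec
      have h1 : φ (lam * ci) - φ 0 ≤ lam * (φ ci - φ 0) := by
        have h2 := (div_le_div_iff₀ (by positivity) hcipos).mp hsec
        nlinarith
      have hval : ((1-lam) * p i + lam * p0 i) / q i = lam * ci := by
        rw [hpi, hcidef]; ring
      have hval0 : p i / q i = 0 := by rw [hpi, zero_div]
      simp only [hgdef, hval, hval0]
      nlinarith [(hq i)]
    · -- p i > 0 : differentiability gives a linear bound
      have hpipos : 0 < p i := lt_of_le_of_ne (hMrange p hp i) (Ne.symm hpi)
      have hx : 0 < p i / q i := div_pos hpipos (hq i)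
      set F : ℝ → ℝ := fun lam => φ (((1-lam) * p i + lam * p0 i) / q i) with hFdef
      have hu : HasDerivAt (fun lam : ℝ => ((1-lam) * p i + lam * p0 i) / q i)
          ((p0 i - p i) / q i) 0 := by
        have h1 : HasDerivAt (fun lam : ℝ => (1-lam) * p i + lam * p0 i) (p0 i - p i) 0 := by
          have := (((hasDerivAt_id (0:ℝ)).const_sub 1).mul_const (p i)).add
            ((hasDerivAt_id (0:ℝ)).mul_const (p0 i))
          exact this.congr_deriv (by ring)
        exact h1.div_const (q i)
      have hφd : HasDerivAt φ (deriv φ (p i / q i)) (((1-(0:ℝ)) * p i + (0:ℝ) * p0 i) / q i) := by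
        rw [show ((1-(0:ℝ)) * p i + (0:ℝ) * p0 i) / q i = p i / q i by ring]
        exact (hφdiff _ hx).hasDerivAt
      have hF : HasDerivAt F (deriv φ (p i / q i) * ((p0 i - p i) / q i)) 0 :=
        HasDerivAt.comp 0 hφd hu
      set D : ℝ := deriv φ (p i / q i) * ((p0 i - p i) / q i) with hDdef
      have hslope : Tendsto (slope F 0) (𝓝[>] (0:ℝ)) (𝓝 D) :=
        (hasDerivAt_iff_tendsto_slope.mp hF).mono_left
          (nhdsWithin_mono 0 (fun x hx => ne_of_gt hx))
      refine ⟨q i * (D + 1), fun _ => ?_⟩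
      filter_upwards [hslope.eventually (eventually_le_nhds (lt_add_one D)),
        self_mem_nhdsWithin] with lam hsl (hlam : 0 < lam)
      have hsl' : (F lam - F 0) / lam ≤ D + 1 := by
        simpa [slope_def_field] using hsl
      have h2 : F lam - F 0 ≤ lam * (D + 1) := by
        rw [div_le_iff₀ hlam] at hsl'
        linarith
      have hF0 : F 0 = φ (p i / q i) := by
        simp only [hFdef]
        norm_num
      rw [hF0] at h2
      have h2' : φ (((1-lam) * p i + lam * p0 i) / q i) - φ (p i / q i) ≤ lam * (D + 1) := h2
      simp only [hgdef]
      nlinarith [(hq i)]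
  choose C hC using key
  -- the j-th term
  have hjbound : ∀ᶠ lam in 𝓝[>] (0:ℝ), g j lam ≤ lam * (q j * c * deriv φ (lam * c)) := by
    filter_upwards [self_mem_nhdsWithin] with lam (hlam : 0 < lam)
    have hyc : 0 < lam * c := by positivity
    have hsl := hφconv.slope_le_deriv (Set.self_mem_Ici) (Set.mem_Ici.mpr hyc.le) hyc
      (hφdiff _ hyc)
    rw [slope_def_field] at hsl
    have h1 : φ (lam * c) - φ 0 ≤ lam * c * deriv φ (lam * c) := by
      rw [div_le_iff₀ (by linarith : (0:ℝ) < lam * c - 0)] at hsl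
      nlinarith
    have hval : ((1-lam) * p j + lam * p0 j) / q j = lam * c := by
      rw [hpj, hcdef]; ring
    have hval0 : p j / q j = 0 := by rw [hpj, zero_div]
    simp only [hgdef, hval, hval0]
    nlinarith [(hq j)]
  have htendj : Tendsto (fun lam => q j * c * deriv φ (lam * c)) (𝓝[>] (0:ℝ)) atBot := by
    have hin : Tendsto (fun lam : ℝ => lam * c) (𝓝[>] (0:ℝ)) (𝓝[>] (0:ℝ)) := by
      apply tendsto_nhdsWithin_of_tendsto_nhds_of_eventually_within
      · have h0 : Tendsto (fun lam : ℝ => lam * c) (𝓝 (0:ℝ)) (𝓝 (0 * c)) :=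
          (continuous_id.mul continuous_const).tendsto 0
        rw [zero_mul] at h0
        exact h0.mono_left nhdsWithin_le_nhds
      · filter_upwards [self_mem_nhdsWithin] with x (hx : 0 < x)
        exact mul_pos hx hcpos
    exact (hderiv.comp hin).const_mul_atBot (mul_pos (hq j) hcpos)
  -- assemble
  have hsum : ∀ᶠ lam in 𝓝[>] (0:ℝ), (∑ i, g i lam) < 0 ∧ lam ∈ Set.Ioc (0:ℝ) 1 := by
    have hall : ∀ᶠ lam in 𝓝[>] (0:ℝ),
        ∀ i ∈ Finset.univ.erase j, g i lam ≤ lam * C i :=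
      (Finset.eventually_all _).mpr fun i hi => hC i (Finset.ne_of_mem_erase hi)
    have hjneg : ∀ᶠ lam in 𝓝[>] (0:ℝ),
        q j * c * deriv φ (lam * c) < -(∑ i ∈ Finset.univ.erase j, C i) :=
      htendj.eventually (eventually_lt_atBot _)
    filter_upwards [hall, hjbound, hjneg, self_mem_nhdsWithin,
      Ioc_mem_nhdsGT (zero_lt_one' ℝ)] with lam h1 h2 h3 (hlam : 0 < lam) hmem
    refine ⟨?_, hmem⟩
    have e1 : (∑ i, g i lam) = g j lam + ∑ i ∈ Finset.univ.erase j, g i lam :=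
      (Finset.add_sum_erase _ _ (Finset.mem_univ j)).symm
    have e2 : ∑ i ∈ Finset.univ.erase j, g i lam ≤ lam * ∑ i ∈ Finset.univ.erase j, C i := by
      rw [Finset.mul_sum]
      exact Finset.sum_le_sum fun i hi => h1 i hi
    have e3 : g j lam < -(lam * ∑ i ∈ Finset.univ.erase j, C i) := by
      calc g j lam ≤ lam * (q j * c * deriv φ (lam * c)) := h2
        _ < lam * (-(∑ i ∈ Finset.univ.erase j, C i)) := mul_lt_mul_of_pos_left h3 hlam
        _ = -(lam * ∑ i ∈ Finset.univ.erase j, C i) := by ring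
    linarith
  obtain ⟨lam, hneg, hlam0, hlam1⟩ := hsum.exists
  set s : Fin m → ℝ := fun i => (1-lam) * p i + lam * p0 i with hsdef
  have hsM : s ∈ M := by
    have h := hMconv hp hp0 (by linarith : (0:ℝ) ≤ 1 - lam) hlam0.le (by ring)
    have he : (1-lam) • p + lam • p0 = s := by
      funext i
      simp [hsdef, Pi.smul_apply, smul_eq_mul]
    rwa [he] at h
  refine ⟨s, hsM, ?_⟩
  have hDD : DphiR φ s q = DphiR φ p q + ∑ i, g i lam := by
    simp only [DphiR, hgdef, hsdef, mul_sub]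
    rw [Finset.sum_sub_distrib]
    ring
  linarith [hneg, hDD.ge]

theorem statement18 (m k : ℕ) (hm : 1 ≤ m) (hk : 1 ≤ k) (hkm : k ≤ m)
    (φ : ℝ → ℝ)
    (hφconv : ConvexOn ℝ (Set.Ici 0) φ)
    (hφ0 : ContinuousWithinAt φ (Set.Ici 0) 0)
    (hφsc : StrictConvexOn ℝ (Set.Ici (0 : ℝ)) φ)
    (hφC2 : ContDiffOn ℝ 2 φ (Set.Ioi (0 : ℝ)))
    (Θ : Set (Fin k → ℝ)) (hΘbd : Bornology.IsBounded Θ)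
    (hΘint : (interior Θ).Nonempty)
    (S : (Fin k → ℝ) → (Fin m → ℝ))
    (hScont : ContinuousOn S (closure Θ))
    (hSinj : Set.InjOn S (closure Θ))
    (hSint : ∀ θ ∈ interior Θ, ∀ i, S θ i ∈ Set.Ioo (0 : ℝ) 1)
    (hSrange : ∀ θ ∈ closure Θ, ∀ i, S θ i ∈ Set.Icc (0 : ℝ) 1)
    (hΘconv : Convex ℝ (closure Θ))
    (A : Matrix (Fin m) (Fin k) ℝ) (γ : Fin m → ℝ)
    (hSaff : ∀ θ ∈ closure Θ, S θ = A.mulVec θ + γ)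
    (hderiv : Filter.Tendsto (deriv φ) (𝓝[>] (0 : ℝ)) Filter.atBot)
    (d : ℕ) (B : Matrix (Fin d) (Fin k) ℝ) (b : Fin d → ℝ)
    (hΘdef : Θ = {θ : Fin k → ℝ | ∀ j, B.mulVec θ j ≤ b j})
    (hMconv : Convex ℝ (S '' closure Θ))
    (hMprob : ∀ p ∈ S '' closure Θ, (∀ i, p i ∈ Set.Icc (0 : ℝ) 1) ∧ ∑ i, p i = 1)
    (q : Fin m → ℝ) (hq : ∀ i, q i ∈ Set.Ioo (0 : ℝ) 1) (hq1 : ∑ i, q i = 1) :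
    ∃ p : Fin m → ℝ,
      (∀ s, IsPhiProjR φ (S '' closure Θ) q s ↔ s = p) ∧
      ∀ i, p i ∈ Set.Ioo (0 : ℝ) 1 := by
  set M : Set (Fin m → ℝ) := S '' closure Θ with hMdef
  have hqpos : ∀ i, 0 < q i := fun i => (hq i).1
  have hφdiff : ∀ x : ℝ, 0 < x → DifferentiableAt ℝ φ x := fun x hx =>
    (hφC2.contDiffAt (isOpen_Ioi.mem_nhds hx)).differentiableAt (by norm_num)
  have hφcont : ContinuousOn φ (Set.Ici 0) := by
    intro x hx
    rcases eq_or_lt_of_le (Set.mem_Ici.mp hx : (0:ℝ) ≤ x) with h | h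
    · rw [← h]; exact hφ0
    · exact ((hφdiff x h).continuousAt).continuousWithinAt
  -- compactness and nonemptiness of M
  have hKc : IsCompact (closure Θ) := hΘbd.isCompact_closure
  have hMc : IsCompact M := hKc.image_of_continuousOn hScont
  obtain ⟨θ0, hθ0⟩ := hΘint
  have hθ0c : θ0 ∈ closure Θ := subset_closure (interior_subset hθ0)
  set p0 : Fin m → ℝ := S θ0 with hp0def
  have hp0M : p0 ∈ M := ⟨θ0, hθ0c, rfl⟩
  have hp0pos : ∀ i, 0 < p0 i := fun i => (hSint θ0 hθ0 i).1
  -- continuity of divergence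
  have hDcont : ContinuousOn (fun s => DphiR φ s q) M := by
    have : ∀ i : Fin m, ContinuousOn (fun s : Fin m → ℝ => q i * φ (s i / q i)) M := by
      intro i
      apply continuousOn_const.mul
      have hcont0 : Continuous (fun s : Fin m → ℝ => s i) := continuous_apply i
      have hcont1 : ContinuousOn (fun s : Fin m → ℝ => s i / q i) M :=
        (hcont0.div_const (q i)).continuousOn
      exact ContinuousOn.comp (g := φ) hφcont hcont1
        (fun s hs => Set.mem_Ici.mpr (div_nonneg ((hMprob s hs).1 i).1 (hqpos i).le))
    exact continuousOn_finset_sum _ fun i _ => this i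
  obtain ⟨p, hpM, hpmin'⟩ := hMc.exists_isMinOn ⟨p0, hp0M⟩ hDcont
  have hpmin : ∀ s ∈ M, DphiR φ p q ≤ DphiR φ s q := fun s hs => isMinOn_iff.mp hpmin' s hs
  -- positivity of p
  have hppos : ∀ i, 0 < p i := by
    by_contra h
    push_neg at h
    obtain ⟨j, hj⟩ := h
    have hpj : p j = 0 := le_antisymm hj ((hMprob p hpM).1 j).1
    obtain ⟨s, hsM, hs⟩ := aux_zero_not_min φ hφconv hφdiff hderiv M hMconv
      (fun r hr i => ((hMprob r hr).1 i).1) q hqpos p hpM j hpj p0 hp0M hp0pos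
    exact absurd (hpmin s hsM) (not_le.mpr hs)
  -- m ≥ 2
  have hm2 : 2 ≤ m := by
    by_contra h
    push_neg at h
    have hm1 : m = 1 := le_antisymm (by omega) hm
    subst hm1
    have : q 0 = 1 := by simpa using hq1
    linarith [(hq 0).2]
  -- p i < 1
  have hplt : ∀ i, p i < 1 := by
    intro i
    by_contra h
    push_neg at h
    have hpi1 : p i = 1 := le_antisymm ((hMprob p hpM).1 i).2 h
    have : Nontrivial (Fin m) := Fin.nontrivial_iff_two_le.mpr hm2
    obtain ⟨j, hji⟩ := exists_ne i
    have hsum := (hMprob p hpM).2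
    have herase : ∑ l ∈ Finset.univ.erase i, p l = 0 := by
      have hadd := Finset.add_sum_erase Finset.univ p (Finset.mem_univ i)
      rw [hsum] at hadd
      linarith [hpi1]
    have hnn : ∀ l ∈ Finset.univ.erase i, 0 ≤ p l := fun l _ => ((hMprob p hpM).1 l).1
    have hle := Finset.single_le_sum hnn (Finset.mem_erase.mpr ⟨hji, Finset.mem_univ j⟩)
    linarith [hppos j, hle, herase.le]
  -- uniqueness
  have huniq : ∀ s, IsPhiProjR φ M q s → s = p := by
    rintro s ⟨hsM, hsmin⟩
    by_contra hne
    obtain ⟨i0, hi0⟩ := Function.ne_iff.mp hne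
    set w : Fin m → ℝ := (1/2 : ℝ) • s + (1/2 : ℝ) • p with hwdef
    have hwM : w ∈ M := hMconv hsM hpM (by norm_num) (by norm_num) (by norm_num)
    have hwapp : ∀ i, w i / q i = (1/2) * (s i / q i) + (1/2) * (p i / q i) := by
      intro i
      simp only [hwdef, Pi.add_apply, Pi.smul_apply, smul_eq_mul]
      ring
    have hmemS : ∀ i, s i / q i ∈ Set.Ici (0:ℝ) := fun i =>
      Set.mem_Ici.mpr (div_nonneg ((hMprob s hsM).1 i).1 (hqpos i).le)
    have hmemP : ∀ i, p i / q i ∈ Set.Ici (0:ℝ) := fun i =>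
      Set.mem_Ici.mpr (div_nonneg ((hMprob p hpM).1 i).1 (hqpos i).le)
    have hlt : DphiR φ w q < (1/2) * DphiR φ s q + (1/2) * DphiR φ p q := by
      simp only [DphiR]
      rw [Finset.mul_sum, Finset.mul_sum, ← Finset.sum_add_distrib]
      apply Finset.sum_lt_sum
      · intro i _
        have := hφconv.2 (hmemS i) (hmemP i) (by norm_num : (0:ℝ) ≤ 1/2)
          (by norm_num : (0:ℝ) ≤ 1/2) (by norm_num)
        simp only [smul_eq_mul] at this
        rw [hwapp i]
        nlinarith [(hqpos i)]
      · refine ⟨i0, Finset.mem_univ i0, ?_⟩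
        have hne0 : s i0 / q i0 ≠ p i0 / q i0 := by
          intro hcon
          have hq0 : q i0 ≠ 0 := (hqpos i0).ne'
          field_simp at hcon
          exact hi0 hcon
        have := hφsc.2 (hmemS i0) (hmemP i0) hne0 (by norm_num : (0:ℝ) < 1/2)
          (by norm_num : (0:ℝ) < 1/2) (by norm_num)
        simp only [smul_eq_mul] at this
        rw [hwapp i0]
        nlinarith [(hqpos i0)]
    have h2 : DphiR φ s q = DphiR φ p q := le_antisymm (hsmin p hpM) (hpmin s hsM)
    have h3 := hsmin w hwM
    linarith
  refine ⟨p, fun s => ⟨huniq s, ?_⟩, fun i => ⟨hppos i, hplt i⟩⟩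
  rintro rfl
  exact ⟨hpM, hpmin⟩
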